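/- In the unfolded flag-gadget circuit with R = 2t+1 repetitions, let (e₁ₛ, e₁f) and (e₂ₛ, e₂f) be error configurations, each of total weight at most t, producing the same observed flag pattern: F^c.mulVec e₁ₛ + e₁f = F^c.mulVec e₂ₛ + e₂f. Let e := e₁ₛ + e₂ₛ. Then the support of e can be partitioned into a set B of boundary locations together with two-element pairs such that: (i) for every p ∈ B, min(wt(D^c.mulVec δ_p), (w+1) − wt(D^c.mulVec δ_p)) ≤ 1, where δ_p is the standard basis vector at p; and (ii) for every pair {p, q}, wt(D^c.mulVec δ_p + D^c.mulVec δ_q) ≤ 1, i.e., the two locations of each pair straddle at most one data CNOT. -/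

import Mathlib

namespace Unfold

/-- The `R`-fold stack of an `m × w` matrix `H` over `ZMod 2`. -/
def stackMatrix (R m w : ℕ) (H : Matrix (Fin m) (Fin w) (ZMod 2)) :
    Matrix (Fin R × Fin m) (Fin w) (ZMod 2) :=
  fun p j => H p.2 j

/-- Lexicographic order on flag-qubit indices `Fin R × Fin m`. -/
def lexLt {R m : ℕ} (a b : Fin R × Fin m) : Prop :=
  a.1 < b.1 ∨ (a.1 = b.1 ∧ a.2 < b.2)

instance {R m : ℕ} (a b : Fin R × Fin m) : Decidable (lexLt a b) := by
  unfold lexLt; infer_instance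

/-- `truncFirst v k` is the indicator vector of the `k` smallest (in the lexicographic
order on `Fin R × Fin m`) nonzero coordinates of `v` (all of them if `k > wt v`). -/
def truncFirst {R m : ℕ} (v : Fin R × Fin m → ZMod 2) (k : ℕ) : Fin R × Fin m → ZMod 2 :=
  fun i =>
    if v i ≠ 0 ∧ (Finset.univ.filter fun j => v j ≠ 0 ∧ lexLt j i).card < k then 1 else 0

/-- The extended column sequence `F̃₀ = 0`, `F̃ᵢ = ` column `i` of the stack of `H` for
`1 ≤ i ≤ w`, `F̃_{w+1} = 0`. -/
def Ftil (R m w : ℕ) (H : Matrix (Fin m) (Fin w) (ZMod 2)) (i : Fin (w + 2)) :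
    Fin R × Fin m → ZMod 2 :=
  if h : 1 ≤ (i : ℕ) ∧ (i : ℕ) ≤ w then
    fun p => stackMatrix R m w H p ⟨(i : ℕ) - 1, by omega⟩
  else 0

/-- The unfolding block between `F̃ᵢ` and `F̃ᵢ₊₁`: the list of columns
`F̃ᵢ + [F̃ᵢ + F̃ᵢ₊₁][k]` for `k = 0, …, wt(F̃ᵢ + F̃ᵢ₊₁) − 1`. -/
def block (R m w : ℕ) (H : Matrix (Fin m) (Fin w) (ZMod 2)) (i : Fin (w + 1)) :
    List (Fin R × Fin m → ZMod 2) :=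
  (List.range (hammingNorm (Ftil R m w H i.castSucc + Ftil R m w H i.succ))).map
    fun k => Ftil R m w H i.castSucc + truncFirst (Ftil R m w H i.castSucc + Ftil R m w H i.succ) k

/-- The unfolded column sequence `c₀, …, c_L`: concatenation of the blocks followed by
the final zero column. -/
def cols (R m w : ℕ) (H : Matrix (Fin m) (Fin w) (ZMod 2)) :
    List (Fin R × Fin m → ZMod 2) :=
  ((List.finRange (w + 1)).flatMap fun i => block R m w H i) ++ [0]

/-- Number of syndrome-error locations, `L + 1`. -/
def N (R m w : ℕ) (H : Matrix (Fin m) (Fin w) (ZMod 2)) : ℕ := (cols R m w H).length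

/-- The physical parity-check matrix `F^c` whose `p`-th column is `c_p`. -/
def Fc (R m w : ℕ) (H : Matrix (Fin m) (Fin w) (ZMod 2)) :
    Matrix (Fin R × Fin m) (Fin (N R m w H)) (ZMod 2) :=
  fun r p => (cols R m w H).get p r

/-- `dpos i` is the index at which `F̃ᵢ` occurs as the `k = 0` element of its block,
i.e. the location of the data CNOT acting on data qubit `i`. -/
def dpos (R m w : ℕ) (H : Matrix (Fin m) (Fin w) (ZMod 2)) (i : Fin (w + 1)) : ℕ :=
  ∑ j ∈ Finset.univ.filter (fun j : Fin (w + 1) => j < i), (block R m w H j).length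

/-- The data-propagation matrix `D^c`: `D^c i p = 1` iff `p ≤ dᵢ`. -/
def Dc (R m w : ℕ) (H : Matrix (Fin m) (Fin w) (ZMod 2)) :
    Matrix (Fin (w + 1)) (Fin (N R m w H)) (ZMod 2) :=
  fun i p => if (p : ℕ) ≤ dpos R m w H i then 1 else 0

end Unfold

namespace Unfold8
open Unfold Finset

lemma zmod2_ne_zero {x : ZMod 2} (h : x ≠ 0) : x = 1 := by revert h; revert x; decide

/-- generic flatMap indexing -/
lemma flat_get {α β : Type*} (f : α → List β) :
    ∀ (l : List α) (i : ℕ) (hi : i < l.length) (k : ℕ) (hk : k < (f l[i]).length),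
      ∃ h : ((l.take i).flatMap f).length + k < (l.flatMap f).length,
        (l.flatMap f)[((l.take i).flatMap f).length + k]'h = (f l[i])[k] := by
  intro l
  induction l with
  | nil => intro i hi; simp at hi
  | cons a tl ih =>
    intro i hi k hk
    cases i with
    | zero =>
      have ha : (a::tl)[0] = a := rfl
      rw [ha] at hk
      simp only [List.take_zero, List.flatMap_nil, List.length_nil, Nat.zero_add,
        List.flatMap_cons, ha]
      refine ⟨?_, ?_⟩
      · rw [List.length_append]; omega
      · exact List.getElem_append_left hk
    | succ i =>
      simp only [List.length_cons] at hi
      have hi' : i < tl.length := by omega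
      simp only [List.getElem_cons_succ] at hk ⊢
      obtain ⟨h, heq⟩ := ih i hi' k hk
      simp only [List.take_succ_cons, List.flatMap_cons, List.length_append, List.length_cons]
      refine ⟨?_, ?_⟩
      · omega
      · rw [List.getElem_append_right (by omega)]
        convert heq using 2
        omega

lemma flat_len_take {α β : Type*} (f : α → List β) (l : List α) (i : ℕ) (hi : i < l.length) :
    ((l.take (i+1)).flatMap f).length = ((l.take i).flatMap f).length + (f l[i]).length := by
  rw [List.take_succ, List.getElem?_eq_getElem hi, Option.toList_some,
    List.flatMap_append, List.length_append, List.flatMap_cons, List.flatMap_nil,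
    List.append_nil]

def uvec (w : ℕ) (i : ℕ) : Fin w → ZMod 2 :=
  if h : 1 ≤ i ∧ i ≤ w then Pi.single ⟨i - 1, by omega⟩ 1 else 0

variable (R m w : ℕ) (H : Matrix (Fin m) (Fin w) (ZMod 2))

def FtilN (i : ℕ) : Fin R × Fin m → ZMod 2 := fun p => H.mulVec (uvec w i) p.2

lemma Ftil_eq (i : Fin (w + 2)) : Ftil R m w H i = FtilN R m w H (i : ℕ) := by
  unfold Ftil FtilN uvec stackMatrix
  split
  · funext p
    rw [Matrix.mulVec_single]
    exact (mul_one _).symm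
  · funext p
    rw [Matrix.mulVec_zero]
    rfl

def dvecN (i : ℕ) : Fin R × Fin m → ZMod 2 := FtilN R m w H i + FtilN R m w H (i + 1)

lemma dvecN_eq (i : ℕ) (p : Fin R × Fin m) :
    dvecN R m w H i p = H.mulVec (uvec w i + uvec w (i + 1)) p.2 := by
  unfold dvecN FtilN
  rw [Matrix.mulVec_add]
  rfl

lemma block_eq (i : Fin (w + 1)) :
    block R m w H i = (List.range (hammingNorm (dvecN R m w H (i : ℕ)))).map
      (fun k => FtilN R m w H (i : ℕ) + truncFirst (dvecN R m w H (i : ℕ)) k) := by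
  unfold block
  have h1 : Ftil R m w H i.castSucc = FtilN R m w H (i : ℕ) := by
    rw [Ftil_eq]; rfl
  have h2 : Ftil R m w H i.succ = FtilN R m w H ((i : ℕ) + 1) := by
    rw [Ftil_eq]; rfl
  rw [h1, h2]
  rfl

/-- count of support in repetitions `< b` -/
def cntLt (v : Fin R × Fin m → ZMod 2) (b : Fin R) : ℕ :=
  (Finset.univ.filter fun j : Fin R × Fin m => v j ≠ 0 ∧ j.1 < b).card

/-- count of support in repetitions `≤ b` -/
def cntLe (v : Fin R × Fin m → ZMod 2) (b : Fin R) : ℕ :=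
  (Finset.univ.filter fun j : Fin R × Fin m => v j ≠ 0 ∧ j.1 ≤ b).card

lemma trunc_eq_zero (v : Fin R × Fin m → ZMod 2) (b : Fin R) (k : ℕ)
    (hk : k ≤ cntLt R m v b) (i : Fin m) : truncFirst v k (b, i) = 0 := by
  unfold truncFirst
  rw [if_neg]
  rintro ⟨hv, hcard⟩
  have hsub : (Finset.univ.filter fun j : Fin R × Fin m => v j ≠ 0 ∧ j.1 < b) ⊆
      (Finset.univ.filter fun j => v j ≠ 0 ∧ lexLt j (b, i)) := by
    intro x hx
    simp only [mem_filter, mem_univ, true_and] at hx ⊢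
    exact ⟨hx.1, Or.inl hx.2⟩
  have := Finset.card_le_card hsub
  unfold cntLt at hk
  omega

lemma trunc_eq_self (v : Fin R × Fin m → ZMod 2) (b : Fin R) (k : ℕ)
    (hk : cntLe R m v b ≤ k) (i : Fin m) : truncFirst v k (b, i) = v (b, i) := by
  unfold truncFirst
  by_cases hv : v (b, i) = 0
  · rw [if_neg]
    · exact hv.symm
    · rintro ⟨h1, _⟩; exact h1 hv
  · rw [if_pos, (zmod2_ne_zero hv).symm]
    refine ⟨hv, ?_⟩
    have hmem : (b, i) ∈ (Finset.univ.filter fun j : Fin R × Fin m => v j ≠ 0 ∧ j.1 ≤ b) := by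
      simp only [mem_filter, mem_univ, true_and]
      exact ⟨hv, le_refl _⟩
    have hsub : (Finset.univ.filter fun j : Fin R × Fin m => v j ≠ 0 ∧ lexLt j (b, i)) ⊆
        (Finset.univ.filter fun j : Fin R × Fin m => v j ≠ 0 ∧ j.1 ≤ b).erase (b, i) := by
      intro x hx
      simp only [mem_filter, mem_univ, true_and, Finset.mem_erase] at hx ⊢
      rcases hx with ⟨hx1, hx2⟩
      rcases hx2 with h | ⟨h1, h2⟩
      · exact ⟨by rintro rfl; exact absurd h (lt_irrefl _), hx1, le_of_lt h⟩
      · exact ⟨by rintro rfl; exact absurd h2 (lt_irrefl _), hx1, le_of_eq h1⟩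
    have h1 := Finset.card_le_card hsub
    have h2 := Finset.card_erase_of_mem hmem
    have h3 : 1 ≤ (Finset.univ.filter fun j : Fin R × Fin m => v j ≠ 0 ∧ j.1 ≤ b).card :=
      Finset.card_pos.mpr ⟨_, hmem⟩
    unfold cntLe at hk
    omega

lemma cntLe_le_cntLt (v : Fin R × Fin m → ZMod 2) {b b' : Fin R} (h : b < b') :
    cntLe R m v b ≤ cntLt R m v b' := by
  apply Finset.card_le_card
  intro x hx
  simp only [mem_filter, mem_univ, true_and] at hx ⊢
  exact ⟨hx.1, lt_of_le_of_lt hx.2 h⟩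

lemma cntLt_le_cntLe (v : Fin R × Fin m → ZMod 2) (b : Fin R) :
    cntLt R m v b ≤ cntLe R m v b := by
  apply Finset.card_le_card
  intro x hx
  simp only [mem_filter, mem_univ, true_and] at hx ⊢
  exact ⟨hx.1, le_of_lt hx.2⟩

lemma one_le_cntLe (v : Fin R × Fin m → ZMod 2) (b : Fin R) (i : Fin m)
    (h : v (b, i) ≠ 0) : 1 ≤ cntLe R m v b := by
  apply Finset.card_pos.mpr
  exact ⟨(b, i), by simp only [mem_filter, mem_univ, true_and]; exact ⟨h, le_refl _⟩⟩

lemma cols_eq : cols R m w H = (List.finRange (w + 1)).flatMap (block R m w H) ++ [0] := rfl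

/-- prefix lengths of the unfolded column sequence -/
def Dp (i : ℕ) : ℕ :=
  (((List.finRange (w + 1)).take i).flatMap (block R m w H)).length

lemma Dp_zero : Dp R m w H 0 = 0 := rfl

lemma finRange_getElem (i : ℕ) (hi : i < w + 1) :
    (List.finRange (w + 1))[i]'(by rw [List.length_finRange]; exact hi) = ⟨i, hi⟩ := by
  rw [List.getElem_finRange]
  rfl

lemma Dp_succ (i : ℕ) (hi : i < w + 1) :
    Dp R m w H (i + 1) = Dp R m w H i + (block R m w H ⟨i, hi⟩).length := by
  unfold Dp
  rw [flat_len_take (block R m w H) _ i (by rw [List.length_finRange]; exact hi)]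
  rw [finRange_getElem]

lemma Dp_le_succ (i : ℕ) : Dp R m w H i ≤ Dp R m w H (i + 1) := by
  by_cases hi : i < w + 1
  · rw [Dp_succ R m w H i hi]; omega
  · unfold Dp
    rw [List.take_of_length_le (by rw [List.length_finRange]; omega),
      List.take_of_length_le (by rw [List.length_finRange]; omega)]

lemma Dp_mono : Monotone (Dp R m w H) := monotone_nat_of_le_succ (Dp_le_succ R m w H)

lemma N_eq : N R m w H = Dp R m w H (w + 1) + 1 := by
  unfold N cols Dp
  rw [List.take_of_length_le (by rw [List.length_finRange])]
  rw [List.length_append]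
  rfl

lemma block_length (i : Fin (w + 1)) :
    (block R m w H i).length = hammingNorm (dvecN R m w H (i : ℕ)) := by
  rw [block_eq]
  rw [List.length_map, List.length_range]

lemma dpos_eq : ∀ (n : ℕ) (hn : n < w + 1), dpos R m w H ⟨n, hn⟩ = Dp R m w H n := by
  intro n
  induction n with
  | zero =>
    intro hn
    unfold dpos
    rw [Finset.filter_false_of_mem, Finset.sum_empty, Dp_zero]
    intro j _
    simp only [Fin.lt_def]
    omega
  | succ n ih =>
    intro hn
    have hn' : n < w + 1 := by omega
    unfold dpos
    have hins : (Finset.univ.filter fun j : Fin (w + 1) => j < ⟨n + 1, hn⟩)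
        = insert ⟨n, hn'⟩ (Finset.univ.filter fun j : Fin (w + 1) => j < ⟨n, hn'⟩) := by
      ext j
      simp only [mem_filter, mem_univ, true_and, Finset.mem_insert, Fin.lt_def, Fin.ext_iff]
      omega
    have hnm : (⟨n, hn'⟩ : Fin (w + 1)) ∉ Finset.univ.filter fun j : Fin (w + 1) => j < ⟨n, hn'⟩ := by
      simp only [mem_filter, mem_univ, true_and, Fin.lt_def]
      omega
    rw [hins, Finset.sum_insert hnm]
    have hih := ih hn'
    unfold dpos at hih
    rw [hih, Dp_succ R m w H n hn']
    omega

lemma col_get_block (i : ℕ) (hi : i < w + 1) (k : ℕ)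
    (hk : k < (block R m w H ⟨i, hi⟩).length) :
    ∃ h : Dp R m w H i + k < N R m w H,
      (cols R m w H).get ⟨Dp R m w H i + k, h⟩
        = FtilN R m w H i + truncFirst (dvecN R m w H i) k := by
  have hlen : i < (List.finRange (w + 1)).length := by rw [List.length_finRange]; exact hi
  have hk' : k < (block R m w H ((List.finRange (w + 1))[i]'hlen)).length := by
    rw [finRange_getElem]; exact hk
  obtain ⟨h, heq⟩ := flat_get (block R m w H) (List.finRange (w + 1)) i hlen k hk'
  have hDp : Dp R m w H i = ((List.take i (List.finRange (w + 1))).flatMap (block R m w H)).length := rfl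
  have hN : Dp R m w H i + k < N R m w H := by
    have hNe : N R m w H = ((List.finRange (w + 1)).flatMap (block R m w H)).length + 1 := by
      unfold N
      rw [cols_eq, List.length_append]
      rfl
    omega
  refine ⟨hN, ?_⟩
  have h2 : Dp R m w H i + k < ((List.finRange (w + 1)).flatMap (block R m w H)).length := by
    rw [hDp]; exact h
  rw [List.get_eq_getElem, List.getElem_eq_iff]
  show (cols R m w H)[Dp R m w H i + k]? = some (FtilN R m w H i + truncFirst (dvecN R m w H i) k)
  rw [cols_eq, List.getElem?_append, if_pos h2, List.getElem?_eq_getElem h2]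
  refine congrArg some ?_
  have heq2 : ((List.finRange (w + 1)).flatMap (block R m w H))[Dp R m w H i + k]'h2
      = (block R m w H ⟨i, hi⟩)[k]'hk := by
    have hbl : block R m w H ((List.finRange (w + 1))[i]'hlen) = block R m w H ⟨i, hi⟩ := by
      rw [finRange_getElem]
    refine Eq.trans heq ?_
    exact List.getElem_of_eq hbl hk'
  rw [heq2]
  have hble := block_eq R m w H ⟨i, hi⟩
  rw [List.getElem_of_eq hble hk, List.getElem_map, List.getElem_range]

lemma col_get_last :
    ∀ h : Dp R m w H (w + 1) < N R m w H,
      (cols R m w H).get ⟨Dp R m w H (w + 1), h⟩ = 0 := by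
  intro h
  have htake : (List.finRange (w + 1)).take (w + 1) = List.finRange (w + 1) :=
    List.take_of_length_le (by rw [List.length_finRange])
  have hlen : Dp R m w H (w + 1) = ((List.finRange (w + 1)).flatMap (block R m w H)).length := by
    unfold Dp
    rw [htake]
  rw [List.get_eq_getElem, List.getElem_eq_iff]
  show (cols R m w H)[Dp R m w H (w + 1)]? = some 0
  rw [cols_eq, List.getElem?_append_right (le_of_eq hlen.symm), hlen]
  simp

/-- the block index of position `p` -/
def lam (p : ℕ) : ℕ := Nat.findGreatest (fun i => Dp R m w H i ≤ p) (w + 1)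

/-- offset of `p` within its block -/
def off (p : ℕ) : ℕ := p - Dp R m w H (lam R m w H p)

lemma Dp_lam_le (p : ℕ) : Dp R m w H (lam R m w H p) ≤ p := by
  unfold lam
  exact Nat.findGreatest_spec (P := fun i => Dp R m w H i ≤ p) (Nat.zero_le _)
    (show Dp R m w H 0 ≤ p from by rw [Dp_zero]; exact Nat.zero_le _)

lemma lam_le_w (p : ℕ) (hp : p < Dp R m w H (w + 1)) : lam R m w H p ≤ w := by
  have h1 : lam R m w H p ≤ w + 1 := Nat.findGreatest_le _
  rcases Nat.lt_or_ge (lam R m w H p) (w + 1) with h | h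
  · omega
  · exfalso
    have := Dp_lam_le R m w H p
    have heq : lam R m w H p = w + 1 := by omega
    rw [heq] at this
    omega

lemma lt_Dp_succ_lam (p : ℕ) (hp : p < Dp R m w H (w + 1)) :
    p < Dp R m w H (lam R m w H p + 1) := by
  have hle := lam_le_w R m w H p hp
  by_contra hcon
  push_neg at hcon
  unfold lam at hle hcon
  exact Nat.findGreatest_is_greatest (P := fun i => Dp R m w H i ≤ p) (n := w + 1)
    (Nat.lt_succ_self _) (by omega) hcon

lemma off_lt (p : ℕ) (hp : p < Dp R m w H (w + 1)) :
    off R m w H p < (block R m w H ⟨lam R m w H p, by have := lam_le_w R m w H p hp; omega⟩).length := by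
  have h1 := Dp_lam_le R m w H p
  have h2 := lt_Dp_succ_lam R m w H p hp
  have h3 := Dp_succ R m w H (lam R m w H p) (by have := lam_le_w R m w H p hp; omega)
  unfold off
  omega

lemma p_eq (p : ℕ) : Dp R m w H (lam R m w H p) + off R m w H p = p ∨ ¬ Dp R m w H (lam R m w H p) ≤ p := by
  unfold off; omega

/-- the effective data-error index contributed at position `p` as seen from repetition `b` -/
def jfun (b : Fin R) (p : ℕ) : ℕ :=
  if p = Dp R m w H (w + 1) then w + 1
  else if cntLe R m (dvecN R m w H (lam R m w H p)) b ≤ off R m w H p then lam R m w H p + 1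
  else lam R m w H p

def good (b : Fin R) (p : ℕ) : Prop :=
  p = Dp R m w H (w + 1) ∨ off R m w H p ≤ cntLt R m (dvecN R m w H (lam R m w H p)) b ∨
    cntLe R m (dvecN R m w H (lam R m w H p)) b ≤ off R m w H p

open scoped Classical in
lemma card_bad (p : ℕ) :
    (Finset.univ.filter fun b : Fin R => ¬ good R m w H b p).card ≤ 1 := by
  rw [Finset.card_le_one]
  intro a ha b hb
  simp only [mem_filter, mem_univ, true_and] at ha hb
  unfold good at ha hb
  push_neg at ha hb
  by_contra hne
  rcases lt_trichotomy a b with h | h | h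
  · have := cntLe_le_cntLt R m (dvecN R m w H (lam R m w H p)) h
    have := cntLt_le_cntLe R m (dvecN R m w H (lam R m w H p)) a
    omega
  · exact hne h
  · have := cntLe_le_cntLt R m (dvecN R m w H (lam R m w H p)) h
    omega

lemma col_val (b : Fin R) (p : ℕ) (hp : p < N R m w H) (hgood : good R m w H b p)
    (r : Fin m) :
    (cols R m w H).get ⟨p, hp⟩ (b, r) = H.mulVec (uvec w (jfun R m w H b p)) r := by
  have hN := N_eq R m w H
  by_cases hlast : p = Dp R m w H (w + 1)
  · subst hlast
    rw [col_get_last R m w H hp]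
    unfold jfun
    rw [if_pos rfl]
    unfold uvec
    rw [dif_neg (by omega), Matrix.mulVec_zero]
    rfl
  · have hplt : p < Dp R m w H (w + 1) := by omega
    have hlam := lam_le_w R m w H p hplt
    have hoff := off_lt R m w H p hplt
    have hpe : Dp R m w H (lam R m w H p) + off R m w H p = p := by
      rcases p_eq R m w H p with h | h
      · exact h
      · exact absurd (Dp_lam_le R m w H p) h
    obtain ⟨h', heq⟩ := col_get_block R m w H (lam R m w H p) (by omega) (off R m w H p) hoff
    have hget : (cols R m w H).get ⟨p, hp⟩
        = FtilN R m w H (lam R m w H p) + truncFirst (dvecN R m w H (lam R m w H p)) (off R m w H p) := by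
      rw [← heq]
      congr 1
      exact Fin.ext hpe.symm
    rw [hget]
    unfold jfun
    rw [if_neg hlast]
    by_cases hc : cntLe R m (dvecN R m w H (lam R m w H p)) b ≤ off R m w H p
    · rw [if_pos hc]
      have ht := trunc_eq_self R m (dvecN R m w H (lam R m w H p)) b (off R m w H p) hc r
      show FtilN R m w H (lam R m w H p) (b, r) + _ = _
      rw [ht]
      show FtilN R m w H (lam R m w H p) (b, r)
          + (FtilN R m w H (lam R m w H p) (b, r) + FtilN R m w H (lam R m w H p + 1) (b, r)) = _
      have hz : ∀ a c : ZMod 2, a + (a + c) = c := by decide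
      rw [hz]
      rfl
    · rw [if_neg hc]
      have hgood' : off R m w H p ≤ cntLt R m (dvecN R m w H (lam R m w H p)) b := by
        unfold good at hgood
        rcases hgood with h | h | h
        · exact absurd h hlast
        · exact h
        · exact absurd h hc
      have ht := trunc_eq_zero R m (dvecN R m w H (lam R m w H p)) b (off R m w H p) hgood' r
      show FtilN R m w H (lam R m w H p) (b, r) + _ = _
      rw [ht, add_zero]
      rfl

section WithHd

variable (hd : ∀ i : ℕ, i ≤ w → ∃ r : Fin m, H.mulVec (uvec w i + uvec w (i + 1)) r ≠ 0)

include hd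

lemma dvec_ne (i : ℕ) (hi : i ≤ w) (b : Fin R) :
    ∃ r : Fin m, dvecN R m w H i (b, r) ≠ 0 := by
  obtain ⟨r, hr⟩ := hd i hi
  exact ⟨r, by rw [dvecN_eq]; exact hr⟩

lemma cntLe_pos (i : ℕ) (hi : i ≤ w) (b b' : Fin R) :
    1 ≤ cntLe R m (dvecN R m w H i) b := by
  obtain ⟨r, hr⟩ := dvec_ne R m w H hd i hi b
  exact one_le_cntLe R m _ b r hr

lemma blen_pos (hR : 0 < R) (i : ℕ) (hi : i < w + 1) :
    1 ≤ (block R m w H ⟨i, hi⟩).length := by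
  rw [block_length]
  obtain ⟨r, hr⟩ := dvec_ne R m w H hd i (by omega) ⟨0, hR⟩
  rw [Nat.one_le_iff_ne_zero]
  intro hc
  rw [hammingNorm_eq_zero] at hc
  exact hr (by rw [hc]; rfl)

lemma Dp_strict (hR : 0 < R) (i : ℕ) (hi : i < w + 1) :
    Dp R m w H i < Dp R m w H (i + 1) := by
  rw [Dp_succ R m w H i hi]
  have := blen_pos R m w H hd hR i hi
  omega

lemma lam_mono (hR : 0 < R) (p q : ℕ) (hpw : p < Dp R m w H (w + 1))
    (hqw : q < Dp R m w H (w + 1)) (hpq : p < q) :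
    lam R m w H p ≤ lam R m w H q := by
  by_contra hcon
  push_neg at hcon
  have h1 : lam R m w H q + 1 ≤ lam R m w H p := hcon
  have h2 := Dp_mono R m w H h1
  have h3 := Dp_lam_le R m w H p
  have h4 := lt_Dp_succ_lam R m w H q hqw
  omega

lemma jfun_cases (b : Fin R) (p : ℕ) (hpw : p < Dp R m w H (w + 1)) :
    (jfun R m w H b p = lam R m w H p + 1 ∧ 1 ≤ off R m w H p) ∨
      jfun R m w H b p = lam R m w H p := by
  have hlam := lam_le_w R m w H p hpw
  unfold jfun
  rw [if_neg (by omega)]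
  by_cases hc : cntLe R m (dvecN R m w H (lam R m w H p)) b ≤ off R m w H p
  · rw [if_pos hc]
    left
    have := cntLe_pos R m w H hd (lam R m w H p) hlam b b
    exact ⟨rfl, by omega⟩
  · rw [if_neg hc]
    right
    rfl

/-- core of the pair condition -/
lemma pair_core (hR : 0 < R) (b : Fin R) (p q : ℕ)
    (hpw : p < Dp R m w H (w + 1)) (hqw : q < Dp R m w H (w + 1)) (hpq : p < q)
    (val : ℕ) (hv1 : 1 ≤ val) (hv2 : val ≤ w)
    (hjp : jfun R m w H b p = val) (hjq : jfun R m w H b q = val) :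
    ∀ i : Fin (w + 1), p ≤ Dp R m w H i.val → Dp R m w H i.val < q →
      i.val = lam R m w H q := by
  intro i hip hiq
  have hlamp := lam_le_w R m w H p hpw
  have hlamq := lam_le_w R m w H q hqw
  have hmono := lam_mono R m w H hd hR p q hpw hqw hpq
  have hDpp := Dp_lam_le R m w H p
  have hDpq := Dp_lam_le R m w H q
  have hsp := lt_Dp_succ_lam R m w H p hpw
  have hsq := lt_Dp_succ_lam R m w H q hqw
  -- i ≥ lam p
  have hi1 : lam R m w H p ≤ i.val := by
    by_contra hcon
    push_neg at hcon
    have h1 : i.val + 1 ≤ lam R m w H p := hcon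
    have h2 := Dp_mono R m w H h1
    have h3 := Dp_strict R m w H hd hR i.val (i.isLt)
    omega
  -- i ≤ lam q
  have hi2 : i.val ≤ lam R m w H q := by
    by_contra hcon
    push_neg at hcon
    have h2 := Dp_mono R m w H (show lam R m w H q + 1 ≤ i.val by omega)
    omega
  rcases jfun_cases R m w H hd b p hpw with ⟨hp1, hp2⟩ | hp1 <;>
    rcases jfun_cases R m w H hd b q hqw with ⟨hq1, _⟩ | hq1
  · -- lam p + 1 = val, lam q + 1 = val
    omega
  · -- lam p + 1 = val, lam q = val
    -- exclude i = lam p: then p ≤ Dp (lam p) ≤ p, so off p = 0, contradiction with hp2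
    have hoff : off R m w H p = p - Dp R m w H (lam R m w H p) := rfl
    by_cases hieq : i.val = lam R m w H p
    · exfalso
      rw [hieq] at hip
      omega
    · omega
  · -- lam p = val, lam q + 1 = val: lam q < lam p contradicts mono
    omega
  · omega

/-- core of the boundary condition, `j = 0` case -/
lemma b0_core (b : Fin R) (p : ℕ) (hpN : p ≤ Dp R m w H (w + 1))
    (hj : jfun R m w H b p = 0) : p < Dp R m w H 1 := by
  have hne : p ≠ Dp R m w H (w + 1) := by
    intro hc
    unfold jfun at hj
    rw [if_pos hc] at hj
    omega
  have hpw : p < Dp R m w H (w + 1) := by omega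
  rcases jfun_cases R m w H hd b p hpw with ⟨hp1, _⟩ | hp1
  · omega
  · have hl : lam R m w H p = 0 := by omega
    have hlt := lt_Dp_succ_lam R m w H p hpw
    rw [hl, Nat.zero_add] at hlt
    omega

/-- core of the boundary condition, `j = w + 1` case -/
lemma bw_core (hR : 0 < R) (b : Fin R) (p : ℕ) (hpN : p ≤ Dp R m w H (w + 1))
    (hj : jfun R m w H b p = w + 1) : Dp R m w H w < p := by
  by_cases hc : p = Dp R m w H (w + 1)
  · have := Dp_strict R m w H hd hR w (by omega)
    omega
  · have hpw : p < Dp R m w H (w + 1) := by omega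
    have hlam := lam_le_w R m w H p hpw
    have hDpp := Dp_lam_le R m w H p
    rcases jfun_cases R m w H hd b p hpw with ⟨hp1, hp2⟩ | hp1
    · have hoff : off R m w H p = p - Dp R m w H (lam R m w H p) := rfl
      have hlw : lam R m w H p = w := by omega
      rw [hlw] at hDpp hoff
      omega
    · omega

end WithHd

/-- perfect matchings of even-cardinality finsets -/
lemma exists_matching {α : Type*} [DecidableEq α] :
    ∀ (n : ℕ) (s : Finset α), s.card = n → Even n →
    ∃ M : Finset (α × α), (∀ pq ∈ M, pq.1 ≠ pq.2) ∧
      M.biUnion (fun pq => ({pq.1, pq.2} : Finset α)) = s ∧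
      (∀ pq ∈ M, ∀ pq' ∈ M, pq ≠ pq' →
        Disjoint ({pq.1, pq.2} : Finset α) ({pq'.1, pq'.2} : Finset α)) := by
  intro n
  induction n using Nat.strong_induction_on with
  | _ n ih =>
    intro s hcard heven
    rcases Nat.eq_zero_or_pos n with h0 | hpos
    · subst h0
      refine ⟨∅, by simp, ?_, by simp⟩
      rw [Finset.biUnion_empty]
      exact (Finset.card_eq_zero.mp hcard).symm
    · have h2 : 2 ≤ n := by
        rcases heven with ⟨k, hk⟩
        omega
      obtain ⟨a, ha⟩ := Finset.card_pos.mp (by omega : 0 < s.card)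
      have hb : 0 < (s.erase a).card := by
        rw [Finset.card_erase_of_mem ha]
        omega
      obtain ⟨c, hc⟩ := Finset.card_pos.mp hb
      have hca : c ≠ a := Finset.ne_of_mem_erase hc
      have hcs : c ∈ s := Finset.mem_of_mem_erase hc
      set s' := (s.erase a).erase c with hs'
      have hcard' : s'.card = n - 2 := by
        rw [hs', Finset.card_erase_of_mem hc, Finset.card_erase_of_mem ha, hcard]
        omega
      have heven' : Even (n - 2) := by
        rcases heven with ⟨k, hk⟩
        exact ⟨k - 1, by omega⟩
      obtain ⟨M, hM1, hM2, hM3⟩ := ih (n - 2) (by omega) s' hcard' heven'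
      refine ⟨insert (a, c) M, ?_, ?_, ?_⟩
      · intro pq hpq
        rcases Finset.mem_insert.mp hpq with h | h
        · subst h; exact fun hc' => hca hc'.symm
        · exact hM1 pq h
      · rw [Finset.biUnion_insert, hM2]
        have : s = insert a (insert c s') := by
          rw [hs', Finset.insert_erase hc, Finset.insert_erase ha]
        rw [this]
        ext x
        simp only [Finset.mem_union, Finset.mem_insert, Finset.mem_singleton]
        tauto
      · intro pq hpq pq' hpq' hne
        have helem : ∀ x ∈ M, x.1 ∈ s' ∧ x.2 ∈ s' := by
          intro x hx
          constructor
          · rw [← hM2]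
            exact Finset.mem_biUnion.mpr ⟨x, hx, by simp⟩
          · rw [← hM2]
            exact Finset.mem_biUnion.mpr ⟨x, hx, by simp⟩
        have has' : a ∉ s' := by
          rw [hs']
          intro hmem
          exact Finset.notMem_erase a s (Finset.mem_of_mem_erase hmem)
        have hcs' : c ∉ s' := by
          rw [hs']
          exact Finset.notMem_erase c (s.erase a)
        rcases Finset.mem_insert.mp hpq with h | h <;>
          rcases Finset.mem_insert.mp hpq' with h' | h'
        · exact absurd (h.trans h'.symm) hne
        · subst h
          obtain ⟨h1', h2'⟩ := helem pq' h'
          rw [Finset.disjoint_left]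
          intro x hx hx'
          simp only [Finset.mem_insert, Finset.mem_singleton] at hx hx'
          rcases hx with rfl | rfl <;> rcases hx' with rfl | rfl
          · exact has' h1'
          · exact has' h2'
          · exact hcs' h1'
          · exact hcs' h2'
        · subst h'
          obtain ⟨h1', h2'⟩ := helem pq h
          rw [Finset.disjoint_right]
          intro x hx hx'
          simp only [Finset.mem_insert, Finset.mem_singleton] at hx hx'
          rcases hx with rfl | rfl <;> rcases hx' with rfl | rfl
          · exact has' h1'
          · exact has' h2'
          · exact hcs' h1'
          · exact hcs' h2'
        · exact hM3 pq h pq' h' hne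

lemma mulVec_sum {α : Type*} [DecidableEq α] (s : Finset α) (g : α → Fin w → ZMod 2) :
    H.mulVec (∑ p ∈ s, g p) = ∑ p ∈ s, H.mulVec (g p) := by
  simp only [← Matrix.mulVecLin_apply]
  exact map_sum (Matrix.mulVecLin H) g s

lemma even_of_cast_zero (c : ℕ) (h : (c : ZMod 2) = 0) : Even c := by
  rw [ZMod.natCast_eq_zero_iff] at h
  exact (even_iff_two_dvd).mpr h

lemma hnorm_add_le {ι : Type*} [Fintype ι] (x y : ι → ZMod 2) :
    hammingNorm (x + y) ≤ hammingNorm x + hammingNorm y := by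
  have h2 : hammingDist (x + y) y = hammingNorm x := by
    unfold hammingDist hammingNorm
    congr 1
    apply Finset.filter_congr
    intro i _
    constructor
    · intro h hc
      exact h (by show x i + y i = y i; rw [hc, zero_add])
    · intro h hc
      exact h ((add_eq_right).mp hc)
  calc hammingNorm (x + y) = hammingDist (x + y) 0 := (hammingDist_zero_right _).symm
    _ ≤ hammingDist (x + y) y + hammingDist y 0 := hammingDist_triangle _ _ _
    _ = hammingNorm x + hammingNorm y := by rw [h2, hammingDist_zero_right]

lemma hnorm_single_le {ι : Type*} [Fintype ι] [DecidableEq ι] (j : ι) :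
    hammingNorm (Pi.single j 1 : ι → ZMod 2) ≤ 1 := by
  show (Finset.filter (fun i => (Pi.single j 1 : ι → ZMod 2) i ≠ 0) Finset.univ).card ≤ 1
  rw [Finset.card_le_one]
  intro a ha b hb
  simp only [mem_filter, mem_univ, true_and] at ha hb
  have h1 : a = j := by
    by_contra hc
    exact ha (Pi.single_eq_of_ne hc 1)
  have h2 : b = j := by
    by_contra hc
    exact hb (Pi.single_eq_of_ne hc 1)
  rw [h1, h2]

lemma uvec_norm_le (j : ℕ) : hammingNorm (uvec w j) ≤ 1 := by
  unfold uvec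
  split
  · exact hnorm_single_le _
  · rw [show hammingNorm (0 : Fin w → ZMod 2) = 0 from by rw [hammingNorm_eq_zero]]
    omega

lemma udiff_ne (hw : 1 ≤ w) (i : ℕ) (hi : i ≤ w) : uvec w i + uvec w (i + 1) ≠ 0 := by
  intro hc
  by_cases h0 : i = 0
  · subst h0
    have hkey := congrFun hc ⟨0, by omega⟩
    simp only [Pi.add_apply, Pi.zero_apply] at hkey
    unfold uvec at hkey
    rw [dif_neg (by omega), dif_pos (by omega), Pi.single_apply] at hkey
    split_ifs at hkey with hcnd
    · simp at hkey
    · exact hcnd (Fin.ext (by simp))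
  · have h1 : 1 ≤ i := by omega
    have hkey := congrFun hc ⟨i - 1, by omega⟩
    simp only [Pi.add_apply, Pi.zero_apply] at hkey
    unfold uvec at hkey
    rw [dif_pos (⟨h1, hi⟩ : 1 ≤ i ∧ i ≤ w), Pi.single_apply] at hkey
    rw [if_pos (show (⟨i - 1, by omega⟩ : Fin w) = ⟨i - 1, by omega⟩ from rfl)] at hkey
    by_cases h2 : i + 1 ≤ w
    · rw [dif_pos (by omega : 1 ≤ i + 1 ∧ i + 1 ≤ w), Pi.single_apply] at hkey
      rw [if_neg (show ¬ (⟨i - 1, by omega⟩ : Fin w) = ⟨i + 1 - 1, by omega⟩ from by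
        intro hcon
        have hval : i - 1 = i + 1 - 1 := congrArg Fin.val hcon
        omega)] at hkey
      rw [add_zero] at hkey
      exact one_ne_zero hkey
    · rw [dif_neg (by omega)] at hkey
      rw [show ((0 : Fin w → ZMod 2) ⟨i - 1, by omega⟩) = 0 from rfl, add_zero] at hkey
      exact one_ne_zero hkey

lemma uvec_ne_imp (j : ℕ) (r : Fin w) (h : uvec w j r ≠ 0) : j = r.val + 1 := by
  unfold uvec at h
  by_cases hj : 1 ≤ j ∧ j ≤ w
  · rw [dif_pos hj] at h
    have hre : r = ⟨j - 1, by omega⟩ := by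
      by_contra hc
      exact h (Pi.single_eq_of_ne hc 1)
    have hval : r.val = j - 1 := by rw [hre]
    omega
  · rw [dif_neg hj] at h
    exact absurd rfl h

lemma uvec_indicator (val j : ℕ) (h1 : 1 ≤ val) (h2 : val ≤ w) (r : Fin w)
    (hr : r.val = val - 1) : uvec w j r = if j = val then 1 else 0 := by
  by_cases hj : j = val
  · rw [if_pos hj]
    unfold uvec
    rw [dif_pos (show 1 ≤ j ∧ j ≤ w by omega)]
    have hre : r = ⟨j - 1, by omega⟩ := Fin.ext (show r.val = j - 1 by omega)
    rw [hre]
    exact Pi.single_eq_same _ _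
  · rw [if_neg hj]
    by_contra hc
    exact hj (by have := uvec_ne_imp w j r hc; omega)

lemma jfun_le (b : Fin R) (p : ℕ) (hp : p ≤ Dp R m w H (w + 1)) :
    jfun R m w H b p ≤ w + 1 := by
  unfold jfun
  by_cases hc : p = Dp R m w H (w + 1)
  · rw [if_pos hc]
  · rw [if_neg hc]
    have := lam_le_w R m w H p (by omega)
    split <;> omega

lemma dpos_eq' (i : Fin (w + 1)) : dpos R m w H i = Dp R m w H i.val := by
  have := dpos_eq R m w H i.val i.isLt
  rwa [Fin.eta] at this

lemma Dc_single_eq (p : Fin (N R m w H)) :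
    (Dc R m w H).mulVec (Pi.single p 1)
      = fun i : Fin (w + 1) => if (p : ℕ) ≤ Dp R m w H i.val then (1 : ZMod 2) else 0 := by
  rw [Matrix.mulVec_single]
  funext i
  rw [MulOpposite.op_one, one_smul]
  show Dc R m w H i p = _
  unfold Dc
  rw [dpos_eq']

lemma Dc_norm (p : Fin (N R m w H)) :
    hammingNorm ((Dc R m w H).mulVec (Pi.single p 1))
      = (Finset.univ.filter fun i : Fin (w + 1) => (p : ℕ) ≤ Dp R m w H i.val).card := by
  rw [Dc_single_eq]
  unfold hammingNorm
  congr 1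
  apply Finset.filter_congr
  intro i _
  by_cases hc : (p : ℕ) ≤ Dp R m w H i.val
  · simp [hc]
  · simp [hc]

lemma pair_norm (hd : ∀ i : ℕ, i ≤ w → ∃ r : Fin m, H.mulVec (uvec w i + uvec w (i + 1)) r ≠ 0)
    (hR : 0 < R) (b : Fin R) (p q : Fin (N R m w H)) (hpq : (p : ℕ) < (q : ℕ))
    (val : ℕ) (hv1 : 1 ≤ val) (hv2 : val ≤ w)
    (hjp : jfun R m w H b (p : ℕ) = val) (hjq : jfun R m w H b (q : ℕ) = val) :
    hammingNorm ((Dc R m w H).mulVec (Pi.single p 1) + (Dc R m w H).mulVec (Pi.single q 1)) ≤ 1 := by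
  have hNe := N_eq R m w H
  have hpn : (p : ℕ) ≠ Dp R m w H (w + 1) := by
    intro hc
    unfold jfun at hjp
    rw [if_pos hc] at hjp
    omega
  have hqn : (q : ℕ) ≠ Dp R m w H (w + 1) := by
    intro hc
    unfold jfun at hjq
    rw [if_pos hc] at hjq
    omega
  have hpw : (p : ℕ) < Dp R m w H (w + 1) := by have := p.isLt; omega
  have hqw : (q : ℕ) < Dp R m w H (w + 1) := by have := q.isLt; omega
  rw [Dc_single_eq, Dc_single_eq]
  unfold hammingNorm
  rw [Finset.card_le_one]
  have hxor : ∀ i : Fin (w + 1),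
      ((if (p : ℕ) ≤ Dp R m w H i.val then (1 : ZMod 2) else 0)
        + if (q : ℕ) ≤ Dp R m w H i.val then (1 : ZMod 2) else 0) ≠ 0 →
      (p : ℕ) ≤ Dp R m w H i.val ∧ Dp R m w H i.val < (q : ℕ) := by
    intro i h
    by_cases h1 : (p : ℕ) ≤ Dp R m w H i.val <;> by_cases h2 : (q : ℕ) ≤ Dp R m w H i.val
    · rw [if_pos h1, if_pos h2] at h
      exact absurd (by decide : (1 : ZMod 2) + 1 = 0) h
    · exact ⟨h1, by omega⟩
    · omega
    · rw [if_neg h1, if_neg h2] at h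
      exact absurd (by decide : (0 : ZMod 2) + 0 = 0) h
  intro i hi i' hi'
  simp only [mem_filter, mem_univ, true_and] at hi hi'
  obtain ⟨ha1, ha2⟩ := hxor i hi
  obtain ⟨hb1, hb2⟩ := hxor i' hi'
  have e1 := pair_core R m w H hd hR b (p : ℕ) (q : ℕ) hpw hqw hpq val hv1 hv2 hjp hjq i ha1 ha2
  have e2 := pair_core R m w H hd hR b (p : ℕ) (q : ℕ) hpw hqw hpq val hv1 hv2 hjp hjq i' hb1 hb2
  exact Fin.ext (e1.trans e2.symm)

end Unfold8


open Unfold in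
/-- in the unfolded flag-gadget circuit with `R = 2t+1` repetitions, for two
error configurations of total weight at most `t` producing the same observed flag pattern,
the support of `e := e₁ₛ + e₂ₛ` partitions into boundary locations (each propagating, up to
the stabilizer, to at most one data error) and two-element pairs each straddling at most
one data CNOT. -/
theorem same_flag_pattern_errors_pair_up (t m w : ℕ) (ht : 1 ≤ t) (hm : 1 ≤ m)
    (hw : 1 ≤ w) (H : Matrix (Fin m) (Fin w) (ZMod 2))
    (hH : ∀ v : Fin w → ZMod 2, v ≠ 0 → hammingNorm v ≤ 2 * t → H.mulVec v ≠ 0)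
    (e₁s e₂s : Fin (N (2 * t + 1) m w H) → ZMod 2)
    (e₁f e₂f : Fin (2 * t + 1) × Fin m → ZMod 2)
    (h₁ : hammingNorm e₁s + hammingNorm e₁f ≤ t)
    (h₂ : hammingNorm e₂s + hammingNorm e₂f ≤ t)
    (hsame : (Fc (2 * t + 1) m w H).mulVec e₁s + e₁f
           = (Fc (2 * t + 1) m w H).mulVec e₂s + e₂f) :
    ∃ (B : Finset (Fin (N (2 * t + 1) m w H)))
      (M : Finset (Fin (N (2 * t + 1) m w H) × Fin (N (2 * t + 1) m w H))),
      (∀ pq ∈ M, pq.1 ≠ pq.2) ∧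
      (Finset.univ.filter fun p => (e₁s + e₂s) p ≠ 0)
        = B ∪ M.biUnion (fun pq => {pq.1, pq.2}) ∧
      Disjoint B (M.biUnion fun pq => {pq.1, pq.2}) ∧
      (∀ pq ∈ M, ∀ pq' ∈ M, pq ≠ pq' →
        Disjoint ({pq.1, pq.2} : Finset (Fin (N (2 * t + 1) m w H)))
          ({pq'.1, pq'.2} : Finset (Fin (N (2 * t + 1) m w H)))) ∧
      (∀ p ∈ B,
        min (hammingNorm ((Dc (2 * t + 1) m w H).mulVec (Pi.single p 1)))
          ((w + 1) - hammingNorm ((Dc (2 * t + 1) m w H).mulVec (Pi.single p 1))) ≤ 1) ∧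
      (∀ pq ∈ M,
        hammingNorm ((Dc (2 * t + 1) m w H).mulVec (Pi.single pq.1 1) +
          (Dc (2 * t + 1) m w H).mulVec (Pi.single pq.2 1)) ≤ 1) := by
  set e : Fin (N (2 * t + 1) m w H) → ZMod 2 := e₁s + e₂s with hedef
  set S := Finset.univ.filter (fun p => e p ≠ 0) with hSdef
  classical
  have hR : 0 < 2 * t + 1 := by omega
  -- distance facts
  have hd : ∀ i : ℕ, i ≤ w →
      ∃ r : Fin m, H.mulVec (Unfold8.uvec w i + Unfold8.uvec w (i + 1)) r ≠ 0 := by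
    intro i hi
    have hne := Unfold8.udiff_ne w hw i hi
    have hnorm : hammingNorm (Unfold8.uvec w i + Unfold8.uvec w (i + 1)) ≤ 2 * t := by
      have ha := Unfold8.hnorm_add_le (Unfold8.uvec w i) (Unfold8.uvec w (i + 1))
      have hb := Unfold8.uvec_norm_le w i
      have hc := Unfold8.uvec_norm_le w (i + 1)
      omega
    have := hH _ hne hnorm
    rw [Function.ne_iff] at this
    exact this
  set f := (Fc (2 * t + 1) m w H).mulVec e with hfdef
  have hfeq : f = e₁f + e₂f := by
    funext x
    have hkey : ∀ a b c d : ZMod 2, a + b = c + d → a + c = b + d := by decide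
    have hx := congrFun hsame x
    simp only [Pi.add_apply] at hx
    have hsplit : f x = (Fc (2 * t + 1) m w H).mulVec e₁s x
        + (Fc (2 * t + 1) m w H).mulVec e₂s x := by
      rw [hfdef, hedef, Matrix.mulVec_add]
      rfl
    rw [hsplit]
    show _ = (e₁f + e₂f) x
    simp only [Pi.add_apply]
    exact hkey _ _ _ _ hx
  have hSe : S.card = hammingNorm e := rfl
  have hcard : S.card + hammingNorm f ≤ 2 * t := by
    have ha : hammingNorm e ≤ hammingNorm e₁s + hammingNorm e₂s := by
      rw [hedef]; exact Unfold8.hnorm_add_le _ _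
    have hb : hammingNorm f ≤ hammingNorm e₁f + hammingNorm e₂f := by
      rw [hfeq]; exact Unfold8.hnorm_add_le _ _
    omega
  -- choose a clean repetition
  set badS := S.biUnion (fun p => Finset.univ.filter fun b : Fin (2 * t + 1) =>
    ¬ Unfold8.good (2 * t + 1) m w H b p.val) with hbadSdef
  have hbadS_card : badS.card ≤ S.card := by
    calc badS.card
        ≤ ∑ p ∈ S, (Finset.univ.filter fun b : Fin (2 * t + 1) =>
            ¬ Unfold8.good (2 * t + 1) m w H b p.val).card := Finset.card_biUnion_le
      _ ≤ ∑ _p ∈ S, 1 := Finset.sum_le_sum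
            (fun p _ => Unfold8.card_bad (2 * t + 1) m w H p.val)
      _ = S.card := by rw [Finset.sum_const, smul_eq_mul, mul_one]
  set nzf := Finset.univ.filter (fun b : Fin (2 * t + 1) => ∃ r, f (b, r) ≠ 0) with hnzfdef
  have hnzf_card : nzf.card ≤ hammingNorm f := by
    have hn : hammingNorm f
        = (Finset.univ.filter fun x : Fin (2 * t + 1) × Fin m => f x ≠ 0).card := rfl
    rw [hn]
    apply Finset.card_le_card_of_injOn
      (fun b => (b, if h : ∃ r, f (b, r) ≠ 0 then h.choose else ⟨0, hm⟩))
    · intro b hb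
      rw [hnzfdef, Finset.mem_coe, Finset.mem_filter] at hb
      dsimp only
      rw [dif_pos hb.2]
      rw [Finset.mem_coe, Finset.mem_filter]
      exact ⟨Finset.mem_univ _, hb.2.choose_spec⟩
    · intro b _ b' _ hbb
      exact congrArg Prod.fst hbb
  have hex : ∃ b : Fin (2 * t + 1), b ∉ badS ∪ nzf := by
    by_contra hcon
    push_neg at hcon
    have hsub : (Finset.univ : Finset (Fin (2 * t + 1))) ⊆ badS ∪ nzf := fun b _ => hcon b
    have hle := Finset.card_le_card hsub
    have hun := Finset.card_union_le badS nzf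
    rw [Finset.card_univ, Fintype.card_fin] at hle
    omega
  obtain ⟨bs, hbs⟩ := hex
  rw [Finset.mem_union] at hbs
  push_neg at hbs
  obtain ⟨hbs1, hbs2⟩ := hbs
  have hgood : ∀ p ∈ S, Unfold8.good (2 * t + 1) m w H bs p.val := by
    intro p hp
    by_contra hcon
    exact hbs1 (Finset.mem_biUnion.mpr ⟨p, hp, by
      rw [Finset.mem_filter]; exact ⟨Finset.mem_univ _, hcon⟩⟩)
  have hfz : ∀ r, f (bs, r) = 0 := by
    intro r
    by_contra hcon
    exact hbs2 (by rw [hnzfdef, Finset.mem_filter]; exact ⟨Finset.mem_univ _, ⟨r, hcon⟩⟩)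
  -- the accumulated data error vanishes
  set v : Fin w → ZMod 2
    := ∑ p ∈ S, Unfold8.uvec w (Unfold8.jfun (2 * t + 1) m w H bs p.val) with hvdef
  have hHv : H.mulVec v = 0 := by
    funext r
    rw [hvdef, Unfold8.mulVec_sum]
    rw [Finset.sum_apply]
    have hcol : ∀ p ∈ S,
        H.mulVec (Unfold8.uvec w (Unfold8.jfun (2 * t + 1) m w H bs p.val)) r
          = (cols (2 * t + 1) m w H).get p (bs, r) := by
      intro p hp
      have hcv := Unfold8.col_val (2 * t + 1) m w H bs p.val p.isLt (hgood p hp) r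
      exact hcv.symm
    rw [Finset.sum_congr rfl hcol]
    have hfr : f (bs, r) = ∑ p ∈ S, (cols (2 * t + 1) m w H).get p (bs, r) := by
      have h1 : f (bs, r) = ∑ p : Fin (N (2 * t + 1) m w H),
          (cols (2 * t + 1) m w H).get p (bs, r) * e p := rfl
      rw [h1, ← Finset.sum_subset (Finset.subset_univ S) (fun p _ hp => by
        have hzero : e p = 0 := by
          by_contra hc
          exact hp (Finset.mem_filter.mpr ⟨Finset.mem_univ _, hc⟩)
        rw [hzero, mul_zero])]
      apply Finset.sum_congr rfl
      intro p hp
      have hone : e p = 1 := Unfold8.zmod2_ne_zero (Finset.mem_filter.mp hp).2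
      rw [hone, mul_one]
    rw [← hfr, hfz r]
    rfl
  have hNpos : 0 < N (2 * t + 1) m w H := by
    rw [Unfold8.N_eq]; omega
  have hvnorm : hammingNorm v ≤ 2 * t := by
    have hnv : hammingNorm v = (Finset.univ.filter fun r : Fin w => v r ≠ 0).card := rfl
    have hle : (Finset.univ.filter fun r : Fin w => v r ≠ 0).card ≤ S.card := by
      apply Finset.card_le_card_of_injOn (fun r : Fin w =>
        if h : ∃ p ∈ S, Unfold8.uvec w (Unfold8.jfun (2 * t + 1) m w H bs p.val) r ≠ 0
        then h.choose else ⟨0, hNpos⟩)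
      · intro r hr
        rw [Finset.mem_coe, Finset.mem_filter] at hr
        have hex2 : ∃ p ∈ S,
            Unfold8.uvec w (Unfold8.jfun (2 * t + 1) m w H bs p.val) r ≠ 0 := by
          by_contra hcon
          push_neg at hcon
          apply hr.2
          rw [hvdef, Finset.sum_apply]
          exact Finset.sum_eq_zero (fun p hp => hcon p hp)
        dsimp only
        rw [dif_pos hex2]
        exact hex2.choose_spec.1
      · intro r hr r' hr' heq
        rw [Finset.mem_coe, Finset.mem_filter] at hr hr'
        have hex2 : ∃ p ∈ S,
            Unfold8.uvec w (Unfold8.jfun (2 * t + 1) m w H bs p.val) r ≠ 0 := by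
          by_contra hcon
          push_neg at hcon
          apply hr.2
          rw [hvdef, Finset.sum_apply]
          exact Finset.sum_eq_zero (fun p hp => hcon p hp)
        have hex2' : ∃ p ∈ S,
            Unfold8.uvec w (Unfold8.jfun (2 * t + 1) m w H bs p.val) r' ≠ 0 := by
          by_contra hcon
          push_neg at hcon
          apply hr'.2
          rw [hvdef, Finset.sum_apply]
          exact Finset.sum_eq_zero (fun p hp => hcon p hp)
        dsimp only at heq
        rw [dif_pos hex2, dif_pos hex2'] at heq
        have hj1 := Unfold8.uvec_ne_imp w _ r hex2.choose_spec.2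
        have hj2 := Unfold8.uvec_ne_imp w _ r' hex2'.choose_spec.2
        rw [heq] at hj1
        exact Fin.ext (by omega)
    omega
  have hv0 : v = 0 := by
    by_contra hcon
    exact hH v hcon hvnorm hHv
  -- each middle class has even cardinality
  have hEven : ∀ val : ℕ, 1 ≤ val → val ≤ w →
      Even (S.filter fun p => Unfold8.jfun (2 * t + 1) m w H bs p.val = val).card := by
    intro val h1 h2
    have hz := congrFun hv0 ⟨val - 1, by omega⟩
    rw [hvdef, Finset.sum_apply] at hz
    have hcongr : ∀ p ∈ S,
        Unfold8.uvec w (Unfold8.jfun (2 * t + 1) m w H bs p.val) ⟨val - 1, by omega⟩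
          = if Unfold8.jfun (2 * t + 1) m w H bs p.val = val then 1 else 0 :=
      fun p _ => Unfold8.uvec_indicator w val _ h1 h2 _ rfl
    rw [Finset.sum_congr rfl hcongr, Finset.sum_boole, Pi.zero_apply] at hz
    exact Unfold8.even_of_cast_zero _ hz
  -- build matchings per class
  have hmatch : ∀ val : ℕ,
      ∃ M : Finset (Fin (N (2 * t + 1) m w H) × Fin (N (2 * t + 1) m w H)),
      (1 ≤ val ∧ val ≤ w) →
      ((∀ pq ∈ M, pq.1 ≠ pq.2) ∧
        M.biUnion (fun pq => ({pq.1, pq.2} : Finset (Fin (N (2 * t + 1) m w H))))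
          = S.filter (fun p => Unfold8.jfun (2 * t + 1) m w H bs p.val = val) ∧
        (∀ pq ∈ M, ∀ pq' ∈ M, pq ≠ pq' →
          Disjoint ({pq.1, pq.2} : Finset (Fin (N (2 * t + 1) m w H)))
            ({pq'.1, pq'.2} : Finset (Fin (N (2 * t + 1) m w H))))) := by
    intro val
    by_cases h : 1 ≤ val ∧ val ≤ w
    · obtain ⟨M, hM⟩ := Unfold8.exists_matching _ _ rfl (hEven val h.1 h.2)
      exact ⟨M, fun _ => hM⟩
    · exact ⟨∅, fun hc => absurd hc h⟩
  choose Mf hMf using hmatch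
  have hjnat : ∀ p : Fin (N (2 * t + 1) m w H),
      (p : ℕ) ≤ Unfold8.Dp (2 * t + 1) m w H (w + 1) := by
    intro p
    have h1 := p.isLt
    have h2 := Unfold8.N_eq (2 * t + 1) m w H
    omega
  -- membership in a pair forces the class value
  have hclass : ∀ (val : ℕ), 1 ≤ val → val ≤ w → ∀ pq ∈ Mf val,
      ∀ x : Fin (N (2 * t + 1) m w H), (x = pq.1 ∨ x = pq.2) →
      x ∈ S ∧ Unfold8.jfun (2 * t + 1) m w H bs x.val = val := by
    intro val hv1 hv2 pq hpq x hx
    have hbi := (hMf val ⟨hv1, hv2⟩).2.1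
    have hxm : x ∈ (Mf val).biUnion
        (fun pq => ({pq.1, pq.2} : Finset (Fin (N (2 * t + 1) m w H)))) := by
      refine Finset.mem_biUnion.mpr ⟨pq, hpq, ?_⟩
      rcases hx with rfl | rfl
      · exact Finset.mem_insert_self _ _
      · exact Finset.mem_insert.mpr (Or.inr (Finset.mem_singleton_self _))
    rw [hbi, Finset.mem_filter] at hxm
    exact hxm
  refine ⟨S.filter (fun p => Unfold8.jfun (2 * t + 1) m w H bs p.val = 0
      ∨ Unfold8.jfun (2 * t + 1) m w H bs p.val = w + 1),
    (Finset.Icc 1 w).biUnion Mf, ?_, ?_, ?_, ?_, ?_, ?_⟩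
  · -- pairs have distinct endpoints
    intro pq hpq
    obtain ⟨val, hval, hpq2⟩ := Finset.mem_biUnion.mp hpq
    rw [Finset.mem_Icc] at hval
    exact (hMf val hval).1 pq hpq2
  · -- the union covers the support
    ext x
    rw [Finset.mem_union]
    constructor
    · intro hx
      have hjle := Unfold8.jfun_le (2 * t + 1) m w H bs x.val (hjnat x)
      by_cases hb : Unfold8.jfun (2 * t + 1) m w H bs x.val = 0
          ∨ Unfold8.jfun (2 * t + 1) m w H bs x.val = w + 1
      · exact Or.inl (Finset.mem_filter.mpr ⟨hx, hb⟩)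
      · right
        push_neg at hb
        set val := Unfold8.jfun (2 * t + 1) m w H bs x.val with hvaldef
        have hv1 : 1 ≤ val := by omega
        have hv2 : val ≤ w := by omega
        have hx2 : x ∈ (Mf val).biUnion
            (fun pq => ({pq.1, pq.2} : Finset (Fin (N (2 * t + 1) m w H)))) := by
          rw [(hMf val ⟨hv1, hv2⟩).2.1]
          exact Finset.mem_filter.mpr ⟨hx, rfl⟩
        obtain ⟨pq, hpq1, hpq2⟩ := Finset.mem_biUnion.mp hx2
        exact Finset.mem_biUnion.mpr ⟨pq,
          Finset.mem_biUnion.mpr ⟨val, Finset.mem_Icc.mpr ⟨hv1, hv2⟩, hpq1⟩, hpq2⟩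
    · intro hx
      rcases hx with hx | hx
      · exact (Finset.mem_filter.mp hx).1
      · obtain ⟨pq, hpq1, hpq2⟩ := Finset.mem_biUnion.mp hx
        obtain ⟨val, hval, hpq3⟩ := Finset.mem_biUnion.mp hpq1
        rw [Finset.mem_Icc] at hval
        have hmem : x = pq.1 ∨ x = pq.2 := by
          rcases Finset.mem_insert.mp hpq2 with h | h
          · exact Or.inl h
          · exact Or.inr (Finset.mem_singleton.mp h)
        exact (hclass val hval.1 hval.2 pq hpq3 x hmem).1
  · -- B is disjoint from the pairs
    rw [Finset.disjoint_left]
    intro x hx hx2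
    obtain ⟨hxS, hj⟩ := Finset.mem_filter.mp hx
    obtain ⟨pq, hpq1, hpq2⟩ := Finset.mem_biUnion.mp hx2
    obtain ⟨val, hval, hpq3⟩ := Finset.mem_biUnion.mp hpq1
    rw [Finset.mem_Icc] at hval
    have hmem : x = pq.1 ∨ x = pq.2 := by
      rcases Finset.mem_insert.mp hpq2 with h | h
      · exact Or.inl h
      · exact Or.inr (Finset.mem_singleton.mp h)
    have := (hclass val hval.1 hval.2 pq hpq3 x hmem).2
    omega
  · -- pairs are pairwise disjoint
    intro pq hpq pq' hpq' hne
    obtain ⟨val, hval, hpq2⟩ := Finset.mem_biUnion.mp hpq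
    obtain ⟨val', hval', hpq2'⟩ := Finset.mem_biUnion.mp hpq'
    rw [Finset.mem_Icc] at hval hval'
    by_cases hvv : val = val'
    · subst hvv
      exact (hMf val hval).2.2 pq hpq2 pq' hpq2' hne
    · rw [Finset.disjoint_left]
      intro x hx hx'
      have hmem : x = pq.1 ∨ x = pq.2 := by
        rcases Finset.mem_insert.mp hx with h | h
        · exact Or.inl h
        · exact Or.inr (Finset.mem_singleton.mp h)
      have hmem' : x = pq'.1 ∨ x = pq'.2 := by
        rcases Finset.mem_insert.mp hx' with h | h
        · exact Or.inl h
        · exact Or.inr (Finset.mem_singleton.mp h)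
      have h1 := (hclass val hval.1 hval.2 pq hpq2 x hmem).2
      have h2 := (hclass val' hval'.1 hval'.2 pq' hpq2' x hmem').2
      exact hvv (h1.symm.trans h2)
  · -- boundary condition
    intro p hp
    obtain ⟨hpS, hj⟩ := Finset.mem_filter.mp hp
    rw [Unfold8.Dc_norm]
    rcases hj with hj | hj
    · have hlt := Unfold8.b0_core (2 * t + 1) m w H hd bs p.val (hjnat p) hj
      have hge : w ≤ (Finset.univ.filter fun i : Fin (w + 1) =>
          (p : ℕ) ≤ Unfold8.Dp (2 * t + 1) m w H i.val).card := by
        have hinj : (Finset.univ : Finset (Fin w)).card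
          ≤ (Finset.univ.filter fun i : Fin (w + 1) =>
              (p : ℕ) ≤ Unfold8.Dp (2 * t + 1) m w H i.val).card :=
        Finset.card_le_card_of_injOn
          (fun i : Fin w => (⟨i.val + 1, by omega⟩ : Fin (w + 1)))
          (fun i _ => by
            rw [Finset.mem_coe, Finset.mem_filter]
            refine ⟨Finset.mem_univ _, ?_⟩
            dsimp only
            have hmono := Unfold8.Dp_mono (2 * t + 1) m w H (show 1 ≤ i.val + 1 by omega)
            omega)
          (fun i _ i' _ hii => by
            have hv : i.val + 1 = i'.val + 1 := by
              have := congrArg Fin.val hii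
              simpa using this
            exact Fin.ext (by omega))
        rw [Finset.card_univ, Fintype.card_fin] at hinj
        exact hinj
      have hle' : (Finset.univ.filter fun i : Fin (w + 1) =>
          (p : ℕ) ≤ Unfold8.Dp (2 * t + 1) m w H i.val).card ≤ w + 1 := by
        have := Finset.card_filter_le (Finset.univ : Finset (Fin (w + 1)))
          (fun i : Fin (w + 1) => (p : ℕ) ≤ Unfold8.Dp (2 * t + 1) m w H i.val)
        rw [Finset.card_univ, Fintype.card_fin] at this
        exact this
      omega
    · have hgt := Unfold8.bw_core (2 * t + 1) m w H hd hR bs p.val (hjnat p) hj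
      have h0 : (Finset.univ.filter fun i : Fin (w + 1) =>
          (p : ℕ) ≤ Unfold8.Dp (2 * t + 1) m w H i.val).card = 0 := by
        rw [Finset.card_eq_zero, Finset.filter_eq_empty_iff]
        intro i _
        have hmono := Unfold8.Dp_mono (2 * t + 1) m w H (show i.val ≤ w by omega)
        omega
      rw [h0]
      omega
  · -- pair condition
    intro pq hpq
    obtain ⟨val, hval, hpq2⟩ := Finset.mem_biUnion.mp hpq
    rw [Finset.mem_Icc] at hval
    have h1 := hclass val hval.1 hval.2 pq hpq2 pq.1 (Or.inl rfl)
    have h2 := hclass val hval.1 hval.2 pq hpq2 pq.2 (Or.inr rfl)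
    have hne12 : pq.1 ≠ pq.2 := (hMf val hval).1 pq hpq2
    have hvne : (pq.1 : ℕ) ≠ (pq.2 : ℕ) := fun hc => hne12 (Fin.ext hc)
    rcases Nat.lt_or_ge (pq.1 : ℕ) (pq.2 : ℕ) with hlt | hge
    · exact Unfold8.pair_norm (2 * t + 1) m w H hd hR bs pq.1 pq.2 hlt val
        hval.1 hval.2 h1.2 h2.2
    · have hlt2 : (pq.2 : ℕ) < (pq.1 : ℕ) := by omega
      have hres := Unfold8.pair_norm (2 * t + 1) m w H hd hR bs pq.2 pq.1 hlt2 val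
        hval.1 hval.2 h2.2 h1.2
      rwa [add_comm ((Dc (2 * t + 1) m w H).mulVec (Pi.single pq.2 1))] at hres
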